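/- Let K be a field of characteristic 0 and s, v, w, w₁ ∈ K with v ≠ 0, w = v·w₁, v² = (9s-1)(s-1), w₁² = s² - 18s + 1, and suppose s ≠ 1, 3s+1 ≠ 0, and w ≠ 0. Define y = 1/2 - (16s(5s-1) + vw)/(2(s-1)(3s+1)v) and t = 1/2 - P/(2(s-1)v²w), where P = 27s⁵ - 315s⁴ - 370s³ + 170s² - 25s + 1. Then negating both v and w (i.e. replacing (v,w₁) by (-v,w₁)) sends (y,t) to (1-y, 1-t). -/
import Mathlib

theorem twenty_branch_involution {K : Type*} [Field K] [CharZero K]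
    (s v w w₁ : K) (hv0 : v ≠ 0) (hw : w = v * w₁)
    (hv : v ^ 2 = (9 * s - 1) * (s - 1)) (hw₁ : w₁ ^ 2 = s ^ 2 - 18 * s + 1)
    (hs1 : s ≠ 1) (hs3 : 3 * s + 1 ≠ 0) (hw0 : w ≠ 0)
    (P y t : K)
    (hP : P = 27 * s ^ 5 - 315 * s ^ 4 - 370 * s ^ 3 + 170 * s ^ 2 - 25 * s + 1)
    (hy : y = 1 / 2 - (16 * s * (5 * s - 1) + v * w) / (2 * (s - 1) * (3 * s + 1) * v))
    (ht : t = 1 / 2 - P / (2 * (s - 1) * v ^ 2 * w)) :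
    1 / 2 - (16 * s * (5 * s - 1) + (-v) * (-w)) / (2 * (s - 1) * (3 * s + 1) * (-v)) = 1 - y ∧
    1 / 2 - P / (2 * (s - 1) * (-v) ^ 2 * (-w)) = 1 - t := by
  have key : ∀ N D : K, 1 / 2 - N / (-D) = 1 - (1 / 2 - N / D) := by
    intro N D
    rw [div_neg]
    ring
  subst hy ht
  constructor
  · have h1 : 2 * (s - 1) * (3 * s + 1) * (-v) = -(2 * (s - 1) * (3 * s + 1) * v) := by ring
    have h2 : (16 * s * (5 * s - 1) + (-v) * (-w)) = 16 * s * (5 * s - 1) + v * w := by ring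
    rw [h1, h2, key]
  · have h1 : 2 * (s - 1) * (-v) ^ 2 * (-w) = -(2 * (s - 1) * v ^ 2 * w) := by ring
    rw [h1, key]
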